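/- Let g : [0,L] → [0,∞) be decreasing with ∫₀^L dt/√(∫ₜ^L g(s)ds) < ∞. Set L_k = L(1 − 2^{−k}) and θ(t) = Σ_{k≥0} χ_{[L_k,L_{k+1})}(t)/√(∫ₜ^{L_{k+1}} g(s)ds). Then ∫₀^L θ(t)dt ≤ (√2/(√2−1)) ∫₀^L dt/√(∫ₜ^L g(s)ds) < ∞. -/

import Mathlib

open MeasureTheory

lemma sqrtInt_integrable {a b c : ℝ} (hab : a ≤ b) (hbc : b ≤ c) :
    IntervalIntegrable (fun t => 1 / Real.sqrt (c - t)) volume a b := by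
  have h1 : IntervalIntegrable (fun x : ℝ => x ^ (-(1/2) : ℝ)) volume (c - a) (c - b) :=
    intervalIntegral.intervalIntegrable_rpow' (by norm_num)
  have h2 := h1.comp_sub_left c
  simp only [sub_sub_cancel] at h2
  rw [intervalIntegrable_iff] at h2 ⊢
  apply h2.congr_fun ?_ measurableSet_uIoc
  intro t ht
  rw [Set.uIoc_of_le hab] at ht
  have h3 : (0:ℝ) ≤ c - t := by linarith [ht.2]
  show (c - t) ^ (-(1/2) : ℝ) = 1 / Real.sqrt (c - t)
  rw [Real.rpow_neg h3, ← Real.sqrt_eq_rpow, one_div]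

lemma sqrtInt_eval {a b c : ℝ} (hab : a ≤ b) (hbc : b ≤ c) :
    ∫ t in a..b, 1 / Real.sqrt (c - t)
      = 2 * (Real.sqrt (c - a) - Real.sqrt (c - b)) := by
  have key : ∫ t in a..b, 1 / Real.sqrt (c - t)
      = (fun t => -2 * Real.sqrt (c - t)) b - (fun t => -2 * Real.sqrt (c - t)) a := by
    apply intervalIntegral.integral_eq_sub_of_hasDeriv_right_of_le hab
    · exact (continuous_const.mul ((continuous_const.sub continuous_id).sqrt)).continuousOn
    · intro x hx
      have hxc : x < c := lt_of_lt_of_le hx.2 hbc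
      have hne : c - x ≠ 0 := by intro h; linarith [sub_eq_zero.mp h]
      have hd : HasDerivAt (fun t => -2 * Real.sqrt (c - t))
          (-2 * (1 / (2 * Real.sqrt (c - x)) * (0 - 1))) x := by
        exact ((Real.hasDerivAt_sqrt hne).comp x
          ((hasDerivAt_const x c).sub (hasDerivAt_id x))).const_mul (-2)
      have : -2 * (1 / (2 * Real.sqrt (c - x)) * (0 - 1)) = 1 / Real.sqrt (c - x) := by
        have : Real.sqrt (c - x) ≠ 0 := Real.sqrt_ne_zero'.mpr (by linarith)
        field_simp
        ring
      rw [this] at hd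
      exact hd.hasDerivWithinAt
    · exact sqrtInt_integrable hab hbc
  rw [key]; ring

theorem stmt13 (L : ℝ) (hL : 0 < L) (g : ℝ → ℝ)
    (hanti : AntitoneOn g (Set.Icc 0 L)) (hnonneg : ∀ t ∈ Set.Icc 0 L, 0 ≤ g t)
    (hpos : ∀ t ∈ Set.Ico 0 L, 0 < g t)
    (hfin : IntegrableOn (fun t => 1 / Real.sqrt (∫ s in t..L, g s)) (Set.Ioo 0 L) volume)
    (Lk : ℕ → ℝ) (hLk : ∀ k, Lk k = L * (1 - (1 / 2) ^ k))
    (θ : ℝ → ℝ)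
    (hθ : ∀ t, θ t = ∑' k : ℕ,
      Set.indicator (Set.Ico (Lk k) (Lk (k + 1)))
        (fun t' => 1 / Real.sqrt (∫ s in t'..(Lk (k + 1)), g s)) t) :
    IntegrableOn θ (Set.Ioo 0 L) volume ∧
    ∫ t in (0:ℝ)..L, θ t ≤ (Real.sqrt 2 / (Real.sqrt 2 - 1)) *
      ∫ t in (0:ℝ)..L, 1 / Real.sqrt (∫ s in t..L, g s) := by
  set C : ℝ := Real.sqrt 2 / (Real.sqrt 2 - 1) with hC
  set h : ℝ → ℝ := fun t => 1 / Real.sqrt (∫ s in t..L, g s) with hh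
  set p : ℕ → Set ℝ := fun k => Set.Ico (Lk k) (Lk (k + 1)) with hp
  set f : ℕ → ℝ → ℝ := fun k t => 1 / Real.sqrt (∫ s in t..(Lk (k+1)), g s) with hf
  -- basic facts about Lk
  have hLk0 : Lk 0 = 0 := by rw [hLk]; simp
  have hLklt : ∀ k, Lk k < L := by
    intro k; rw [hLk]; nlinarith [pow_pos (by norm_num : (0:ℝ) < 1/2) k]
  have hLkmono : StrictMono Lk := by
    apply strictMono_nat_of_lt_succ
    intro k
    rw [hLk, hLk]
    have : (1/2:ℝ)^(k+1) < (1/2)^k := by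
      apply pow_lt_pow_right_of_lt_one₀ <;> norm_num
    nlinarith
  have hLknn : ∀ k, 0 ≤ Lk k := fun k => hLk0 ▸ (hLkmono.monotone (Nat.zero_le k))
  have hLkmem : ∀ k, Lk k ∈ Set.Ico (0:ℝ) L := fun k => ⟨hLknn k, hLklt k⟩
  have hLsub : ∀ k, L - Lk k = L * (1/2)^k := by intro k; rw [hLk]; ring
  -- integrability of g
  have hgint : IntegrableOn g (Set.Icc 0 L) volume :=
    AntitoneOn.integrableOn_isCompact isCompact_Icc hanti
  have hgii : ∀ a b : ℝ, 0 ≤ a → a ≤ b → b ≤ L → IntervalIntegrable g volume a b := by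
    intro a b ha hab hbL
    rw [intervalIntegrable_iff, Set.uIoc_of_le hab]
    exact hgint.mono_set ((Set.Ioc_subset_Icc_self).trans (Set.Icc_subset_Icc ha hbL))
  -- lower bound for the integral of g
  have hlow : ∀ a b : ℝ, 0 ≤ a → a ≤ b → b ≤ L →
      (b - a) * g b ≤ ∫ s in a..b, g s := by
    intro a b ha hab hbL
    have := intervalIntegral.integral_mono_on (f := fun _ => g b) (g := g) hab
      (intervalIntegrable_const) (hgii a b ha hab hbL)
      (fun x hx => hanti ⟨le_trans ha hx.1, le_trans hx.2 hbL⟩ ⟨le_trans ha hab, hbL⟩ hx.2)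
    simpa [smul_eq_mul, mul_comm] using this
  have hup : ∀ a : ℝ, 0 ≤ a → a ≤ L → (∫ s in a..L, g s) ≤ (L - a) * g a := by
    intro a ha haL
    have := intervalIntegral.integral_mono_on (f := g) (g := fun _ => g a) haL
      (hgii a L ha haL le_rfl) (intervalIntegrable_const)
      (fun x hx => hanti ⟨ha, haL⟩ ⟨le_trans ha hx.1, hx.2⟩ hx.1)
    simpa [smul_eq_mul, mul_comm] using this
  have hIpos : ∀ t : ℝ, 0 ≤ t → t < L → 0 < ∫ s in t..L, g s := by
    intro t ht htL
    set m := (t + L) / 2 with hm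
    have htm : t < m := by rw [hm]; linarith
    have hmL : m < L := by rw [hm]; linarith
    have hm0 : 0 ≤ m := le_trans ht htm.le
    have h1 : (m - t) * g m ≤ ∫ s in t..m, g s := hlow t m ht htm.le hmL.le
    have h2 : 0 ≤ ∫ s in m..L, g s :=
      intervalIntegral.integral_nonneg hmL.le
        (fun x hx => hnonneg x ⟨le_trans hm0 hx.1, hx.2⟩)
    have h3 : (∫ s in t..m, g s) + ∫ s in m..L, g s = ∫ s in t..L, g s :=
      intervalIntegral.integral_add_adjacent_intervals
        (hgii t m ht htm.le hmL.le) (hgii m L hm0 hmL.le le_rfl)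
    have hgm : 0 < g m := hpos m ⟨hm0, hmL⟩
    nlinarith
  -- θ equals f k on piece p k
  have hθeq : ∀ k, ∀ t ∈ p k, θ t = f k t := by
    intro k t ht
    have hcol : (∑' j : ℕ, (Set.Ico (Lk j) (Lk (j+1))).indicator
        (fun t' => 1 / Real.sqrt (∫ s in t'..(Lk (j+1)), g s)) t)
        = (Set.Ico (Lk k) (Lk (k+1))).indicator
          (fun t' => 1 / Real.sqrt (∫ s in t'..(Lk (k+1)), g s)) t := by
      apply tsum_eq_single
      intro j hj
      apply Set.indicator_of_notMem
      intro hmem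
      rcases lt_or_gt_of_ne hj with hjk | hjk
      · exact absurd hmem.2
          (not_lt.mpr (le_trans (hLkmono.monotone (Nat.succ_le_of_lt hjk)) ht.1))
      · exact absurd ht.2
          (not_lt.mpr (le_trans (hLkmono.monotone (Nat.succ_le_of_lt hjk)) hmem.1))
    rw [hθ, hcol, Set.indicator_of_mem ht]
  have hθnn : ∀ t, 0 ≤ θ t := by
    intro t
    rw [hθ]
    apply tsum_nonneg
    intro k
    apply Set.indicator_nonneg
    intro x _
    positivity
  have hhnn : ∀ t, 0 ≤ h t := fun t => by rw [hh]; positivity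
  -- union of pieces
  have hunion : (⋃ k, p k) = Set.Ico 0 L := by
    apply Set.eq_of_subset_of_subset
    · intro t ht
      obtain ⟨k, hk⟩ := Set.mem_iUnion.mp ht
      exact ⟨le_trans (hLknn k) hk.1, lt_of_lt_of_le hk.2 (hLklt (k+1)).le⟩
    · intro t ht
      have hex : ∃ n, t < Lk n := by
        obtain ⟨n, hn⟩ := exists_pow_lt_of_lt_one
          (div_pos (by linarith [ht.2] : (0:ℝ) < L - t) hL) (show (1/2:ℝ) < 1 by norm_num)
        refine ⟨n, ?_⟩
        rw [hLk]
        have h2 : (1/2:ℝ)^n * L < L - t := (lt_div_iff₀ hL).mp hn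
        nlinarith
      classical
      set n₀ := Nat.find hex with hn₀
      have hn₀pos : n₀ ≠ 0 := by
        intro h0
        have := Nat.find_spec hex
        rw [← hn₀, h0, hLk0] at this
        exact absurd ht.1 (not_le.mpr this)
      obtain ⟨m, hm⟩ := Nat.exists_eq_succ_of_ne_zero hn₀pos
      refine Set.mem_iUnion.mpr ⟨m, ?_, ?_⟩
      · by_contra hcon
        exact Nat.find_min hex (by omega : m < n₀) (not_le.mp hcon)
      · have := Nat.find_spec hex
        rwa [← hn₀, hm] at this
  have hpd : Pairwise (Function.onFun Disjoint p) := by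
    intro i j hij
    rw [Function.onFun, Set.disjoint_left]
    intro t hti htj
    rcases lt_or_gt_of_ne hij with hlt | hlt
    · exact absurd hti.2
        (not_lt.mpr (le_trans (hLkmono.monotone (Nat.succ_le_of_lt hlt)) htj.1))
    · exact absurd htj.2
        (not_lt.mpr (le_trans (hLkmono.monotone (Nat.succ_le_of_lt hlt)) hti.1))
  have hpmeas : ∀ k, MeasurableSet (p k) := fun k => measurableSet_Ico
  -- a.e. strong measurability of θ on (0, L)
  have haesm : AEStronglyMeasurable θ (volume.restrict (Set.Ioo 0 L)) := by
    have hg' : Integrable ((Set.Icc 0 L).indicator g) volume :=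
      (integrable_indicator_iff measurableSet_Icc).mpr hgint
    have hkey : ∀ k : ℕ, AEStronglyMeasurable θ (volume.restrict (p k)) := by
      intro k
      have hsub : ∀ t ∈ p k, Set.uIcc t (Lk (k+1)) ⊆ Set.Icc 0 L := by
        intro t ht
        rw [Set.uIcc_of_le ht.2.le]
        exact Set.Icc_subset_Icc (le_trans (hLknn k) ht.1) (hLklt (k+1)).le
      have intEq : ∀ t ∈ p k, (∫ s in t..(Lk (k+1)), (Set.Icc 0 L).indicator g s)
          = ∫ s in t..(Lk (k+1)), g s := by
        intro t ht
        apply intervalIntegral.integral_congr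
        intro s hs
        exact Set.indicator_of_mem (hsub t ht hs) g
      have hprim : Continuous fun t => ∫ s in t..(Lk (k+1)), (Set.Icc 0 L).indicator g s := by
        have h1 := intervalIntegral.continuous_primitive
          (fun a b => hg'.intervalIntegrable) (Lk (k+1))
        have h2 : (fun t => ∫ s in t..(Lk (k+1)), (Set.Icc 0 L).indicator g s)
            = fun t => -(∫ s in (Lk (k+1))..t, (Set.Icc 0 L).indicator g s) := by
          funext t; rw [← intervalIntegral.integral_symm]
        rw [h2]; exact h1.neg
      have hposG : ∀ t ∈ p k, 0 < ∫ s in t..(Lk (k+1)), g s := by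
        intro t ht
        have h1 : 0 < Lk (k+1) - t := by linarith [ht.2]
        have h2 := hlow t (Lk (k+1)) (le_trans (hLknn k) ht.1) ht.2.le (hLklt (k+1)).le
        have h3 : 0 < g (Lk (k+1)) := hpos _ (hLkmem (k+1))
        nlinarith
      have hcO : ContinuousOn
          (fun t => 1 / Real.sqrt (∫ s in t..(Lk (k+1)), (Set.Icc 0 L).indicator g s))
          (p k) := by
        apply ContinuousOn.div continuousOn_const (hprim.sqrt.continuousOn)
        intro t ht
        rw [intEq t ht]
        exact (Real.sqrt_pos.mpr (hposG t ht)).ne'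
      apply (hcO.aestronglyMeasurable (hpmeas k)).congr
      exact (ae_restrict_iff' (hpmeas k)).mpr
        (ae_of_all _ fun t ht => by simp only [hθeq k t ht, hf]; rw [intEq t ht])
    have h1 : AEStronglyMeasurable θ (volume.restrict (⋃ k, p k)) :=
      aestronglyMeasurable_iUnion_iff.mpr hkey
    exact h1.mono_measure
      (Measure.restrict_mono (by rw [hunion]; exact Set.Ioo_subset_Ico_self) le_rfl)
  -- core per-piece estimates
  have hs2 : (1:ℝ) < Real.sqrt 2 := by
    have h1 : (1:ℝ) = Real.sqrt 1 := Real.sqrt_one.symm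
    rw [h1]
    exact Real.sqrt_lt_sqrt (by norm_num) (by norm_num)
  have hCnn : 0 ≤ C := div_nonneg (Real.sqrt_nonneg 2) (by linarith)
  have hcore : ∀ k, (∫⁻ t in p k, ENNReal.ofReal (θ t)) ≤
      ENNReal.ofReal C * ∫⁻ t in p (k+1), ENNReal.ofReal (h t) := by
    intro k
    have hab : Lk k < Lk (k+1) := hLkmono (Nat.lt_succ_self k)
    have hbb' : Lk (k+1) < Lk (k+2) := hLkmono (Nat.lt_succ_self (k+1))
    have hcb : 0 < g (Lk (k+1)) := hpos _ (hLkmem (k+1))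
    have hscb : 0 < Real.sqrt (g (Lk (k+1))) := Real.sqrt_pos.mpr hcb
    -- Step 1: pointwise upper bound on piece k
    have hstep1 : (∫⁻ t in p k, ENNReal.ofReal (θ t)) ≤
        ∫⁻ t in p k, ENNReal.ofReal
          ((1 / Real.sqrt (g (Lk (k+1)))) * (1 / Real.sqrt (Lk (k+1) - t))) := by
      apply lintegral_mono_ae
      rw [ae_restrict_iff' (hpmeas k)]
      apply ae_of_all
      intro t ht
      apply ENNReal.ofReal_le_ofReal
      have h1 : 0 < Lk (k+1) - t := by linarith [ht.2]
      have h2 : (Lk (k+1) - t) * g (Lk (k+1)) ≤ ∫ s in t..Lk (k+1), g s :=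
        hlow t _ (le_trans (hLknn k) ht.1) ht.2.le (hLklt _).le
      have h3 : 0 < (Lk (k+1) - t) * g (Lk (k+1)) := mul_pos h1 hcb
      have h5 : 0 < Real.sqrt ((Lk (k+1) - t) * g (Lk (k+1))) := Real.sqrt_pos.mpr h3
      have h6 : θ t = 1 / Real.sqrt (∫ s in t..Lk (k+1), g s) := by
        rw [hθeq k t ht, hf]
      rw [h6]
      calc 1 / Real.sqrt (∫ s in t..Lk (k+1), g s)
          ≤ 1 / Real.sqrt ((Lk (k+1) - t) * g (Lk (k+1))) :=
            one_div_le_one_div_of_le h5 (Real.sqrt_le_sqrt h2)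
        _ = (1 / Real.sqrt (g (Lk (k+1)))) * (1 / Real.sqrt (Lk (k+1) - t)) := by
            rw [Real.sqrt_mul h1.le]; ring
    -- Step 2: evaluate the upper bound integral
    have hstep2 : (∫⁻ t in p k, ENNReal.ofReal
          ((1 / Real.sqrt (g (Lk (k+1)))) * (1 / Real.sqrt (Lk (k+1) - t))))
        = ENNReal.ofReal ((1 / Real.sqrt (g (Lk (k+1)))) *
            (2 * (Real.sqrt (Lk (k+1) - Lk k) - Real.sqrt (Lk (k+1) - Lk (k+1))))) := by
      have hii : IntervalIntegrable
          (fun t => (1 / Real.sqrt (g (Lk (k+1)))) * (1 / Real.sqrt (Lk (k+1) - t)))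
          volume (Lk k) (Lk (k+1)) :=
        (sqrtInt_integrable hab.le le_rfl).const_mul _
      have hmeq : volume.restrict (p k) = volume.restrict (Set.Ioc (Lk k) (Lk (k+1))) := by
        rw [hp]
        exact Measure.restrict_congr_set Ico_ae_eq_Ioc
      rw [hmeq, ← ofReal_integral_eq_lintegral_ofReal]
      · congr 1
        rw [← intervalIntegral.integral_of_le hab.le,
          intervalIntegral.integral_const_mul, sqrtInt_eval hab.le le_rfl]
      · exact (intervalIntegrable_iff_integrableOn_Ioc_of_le hab.le).mp hii
      · apply ae_of_all
        intro t
        positivity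
    -- Step 3: lower bound for the h-integral on piece k+1
    have hstep3 : ENNReal.ofReal ((1 / Real.sqrt (g (Lk (k+1)))) *
          (2 * (Real.sqrt (L - Lk (k+1)) - Real.sqrt (L - Lk (k+2)))))
        ≤ ∫⁻ t in p (k+1), ENNReal.ofReal (h t) := by
      have hii : IntervalIntegrable
          (fun t => (1 / Real.sqrt (g (Lk (k+1)))) * (1 / Real.sqrt (L - t)))
          volume (Lk (k+1)) (Lk (k+2)) :=
        (sqrtInt_integrable hbb'.le (hLklt (k+2)).le).const_mul _
      have hmeq : volume.restrict (p (k+1)) = volume.restrict (Set.Ioc (Lk (k+1)) (Lk (k+2))) := by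
        rw [hp]
        exact Measure.restrict_congr_set Ico_ae_eq_Ioc
      have heval : (∫⁻ t in p (k+1), ENNReal.ofReal
            ((1 / Real.sqrt (g (Lk (k+1)))) * (1 / Real.sqrt (L - t))))
          = ENNReal.ofReal ((1 / Real.sqrt (g (Lk (k+1)))) *
              (2 * (Real.sqrt (L - Lk (k+1)) - Real.sqrt (L - Lk (k+2))))) := by
        rw [hmeq, ← ofReal_integral_eq_lintegral_ofReal]
        · congr 1
          rw [← intervalIntegral.integral_of_le hbb'.le,
            intervalIntegral.integral_const_mul, sqrtInt_eval hbb'.le (hLklt (k+2)).le]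
        · exact (intervalIntegrable_iff_integrableOn_Ioc_of_le hbb'.le).mp hii
        · apply ae_of_all
          intro t
          positivity
      rw [← heval]
      apply lintegral_mono_ae
      rw [ae_restrict_iff' (hpmeas (k+1))]
      apply ae_of_all
      intro t ht
      apply ENNReal.ofReal_le_ofReal
      have ht0 : 0 ≤ t := le_trans (hLknn (k+1)) ht.1
      have htL : t < L := lt_trans ht.2 (hLklt (k+2))
      have h1 : 0 < L - t := by linarith
      have h2 : (∫ s in t..L, g s) ≤ (L - t) * g t := hup t ht0 htL.le
      have h3 : g t ≤ g (Lk (k+1)) :=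
        hanti ⟨hLknn (k+1), (hLklt (k+1)).le⟩ ⟨ht0, htL.le⟩ ht.1
      have h4 : (∫ s in t..L, g s) ≤ (L - t) * g (Lk (k+1)) := by
        nlinarith [mul_le_mul_of_nonneg_left h3 h1.le]
      have h5 : 0 < ∫ s in t..L, g s := hIpos t ht0 htL
      simp only [hh]
      calc (1 / Real.sqrt (g (Lk (k+1)))) * (1 / Real.sqrt (L - t))
          = 1 / Real.sqrt ((L - t) * g (Lk (k+1))) := by
            rw [Real.sqrt_mul h1.le]; ring
        _ ≤ 1 / Real.sqrt (∫ s in t..L, g s) :=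
            one_div_le_one_div_of_le (Real.sqrt_pos.mpr h5) (Real.sqrt_le_sqrt h4)
    -- Step 4: arithmetic identity and combination
    have hba : Lk (k+1) - Lk k = L * (1/2)^(k+1) := by rw [hLk, hLk]; ring
    have hBs : Real.sqrt (L - Lk (k+2)) * Real.sqrt 2 = Real.sqrt (L - Lk (k+1)) := by
      rw [hLsub, hLsub, ← Real.sqrt_mul (by positivity)]
      congr 1
      ring
    have harith : (1 / Real.sqrt (g (Lk (k+1)))) *
          (2 * (Real.sqrt (Lk (k+1) - Lk k) - Real.sqrt (Lk (k+1) - Lk (k+1))))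
        = C * ((1 / Real.sqrt (g (Lk (k+1)))) *
          (2 * (Real.sqrt (L - Lk (k+1)) - Real.sqrt (L - Lk (k+2))))) := by
      have hBA : Real.sqrt (Lk (k+1) - Lk k) = Real.sqrt (L - Lk (k+1)) := by
        rw [hba, hLsub]
      rw [sub_self, Real.sqrt_zero, sub_zero, hBA, hC]
      have hne : Real.sqrt 2 - 1 ≠ 0 := by linarith
      field_simp
      nlinarith [hBs]
    calc (∫⁻ t in p k, ENNReal.ofReal (θ t)) ≤ _ := hstep1
      _ = _ := hstep2
      _ = ENNReal.ofReal C * ENNReal.ofReal ((1 / Real.sqrt (g (Lk (k+1)))) *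
            (2 * (Real.sqrt (L - Lk (k+1)) - Real.sqrt (L - Lk (k+2))))) := by
          rw [harith, ENNReal.ofReal_mul hCnn]
      _ ≤ ENNReal.ofReal C * ∫⁻ t in p (k+1), ENNReal.ofReal (h t) :=
          mul_le_mul_right hstep3 _
  -- total bound
  have htot : (∫⁻ t in Set.Ioo 0 L, ENNReal.ofReal (θ t)) ≤
      ENNReal.ofReal (C * ∫ t in Set.Ioo 0 L, h t) := by
    have hΘeq : (∫⁻ t in Set.Ioo 0 L, ENNReal.ofReal (θ t))
        = ∑' k, ∫⁻ t in p k, ENNReal.ofReal (θ t) := by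
      rw [Measure.restrict_congr_set Ioo_ae_eq_Ico, ← hunion,
        lintegral_iUnion hpmeas hpd]
    have hd2 : Pairwise (Function.onFun Disjoint fun k => p (k+1)) :=
      fun i j hij => hpd (by omega : i + 1 ≠ j + 1)
    have hHsum : (∑' k, ∫⁻ t in p (k+1), ENNReal.ofReal (h t))
        ≤ ∫⁻ t in Set.Ioo 0 L, ENNReal.ofReal (h t) := by
      rw [← lintegral_iUnion (fun k => hpmeas (k+1)) hd2]
      apply lintegral_mono_set
      intro t ht
      obtain ⟨k, hk⟩ := Set.mem_iUnion.mp ht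
      have h0 : (0:ℝ) < Lk (k+1) := hLk0 ▸ hLkmono (Nat.succ_pos k)
      exact ⟨lt_of_lt_of_le h0 hk.1, lt_trans hk.2 (hLklt _)⟩
    have hHI : (∫⁻ t in Set.Ioo 0 L, ENNReal.ofReal (h t))
        = ENNReal.ofReal (∫ t in Set.Ioo 0 L, h t) :=
      (ofReal_integral_eq_lintegral_ofReal hfin (ae_of_all _ hhnn)).symm
    calc (∫⁻ t in Set.Ioo 0 L, ENNReal.ofReal (θ t))
        = ∑' k, ∫⁻ t in p k, ENNReal.ofReal (θ t) := hΘeq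
      _ ≤ ∑' k, (ENNReal.ofReal C * ∫⁻ t in p (k+1), ENNReal.ofReal (h t)) :=
          ENNReal.tsum_le_tsum hcore
      _ = ENNReal.ofReal C * ∑' k, ∫⁻ t in p (k+1), ENNReal.ofReal (h t) :=
          ENNReal.tsum_mul_left
      _ ≤ ENNReal.ofReal C * ∫⁻ t in Set.Ioo 0 L, ENNReal.ofReal (h t) :=
          mul_le_mul_right hHsum _
      _ = ENNReal.ofReal (C * ∫ t in Set.Ioo 0 L, h t) := by
          rw [hHI, ← ENNReal.ofReal_mul hCnn]
  have hInn : 0 ≤ ∫ t in Set.Ioo 0 L, h t := integral_nonneg hhnn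
  have hint : IntegrableOn θ (Set.Ioo 0 L) volume := by
    refine ⟨haesm, ?_⟩
    rw [hasFiniteIntegral_iff_ofReal (ae_of_all _ hθnn)]
    exact lt_of_le_of_lt htot ENNReal.ofReal_lt_top
  refine ⟨hint, ?_⟩
  have hIoc : (∫ t in (0:ℝ)..L, θ t) = ∫ t in Set.Ioo 0 L, θ t := by
    rw [intervalIntegral.integral_of_le hL.le, integral_Ioc_eq_integral_Ioo]
  have hIoch : (∫ t in (0:ℝ)..L, h t) = ∫ t in Set.Ioo 0 L, h t := by
    rw [intervalIntegral.integral_of_le hL.le, integral_Ioc_eq_integral_Ioo]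
  rw [hIoc]
  calc (∫ t in Set.Ioo 0 L, θ t)
      = (∫⁻ t in Set.Ioo 0 L, ENNReal.ofReal (θ t)).toReal :=
        integral_eq_lintegral_of_nonneg_ae (ae_of_all _ hθnn) haesm
    _ ≤ (ENNReal.ofReal (C * ∫ t in Set.Ioo 0 L, h t)).toReal :=
        ENNReal.toReal_mono ENNReal.ofReal_ne_top htot
    _ = C * ∫ t in Set.Ioo 0 L, h t := ENNReal.toReal_ofReal (mul_nonneg hCnn hInn)
    _ = C * ∫ t in (0:ℝ)..L, h t := by rw [hIoch]
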